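/- For all n ≥ 0, P_{n+1}(x) = (1+x^2)·Σ_{k=0}^{n} C(n,k)·Q_k(x)·Q_{n-k}(x). -/

import Mathlib

open Polynomial Finset

noncomputable def tanDerivPoly : ℕ → Polynomial ℝ
  | 0 => X
  | n + 1 => (1 + X ^ 2) * derivative (tanDerivPoly n)

noncomputable def secDerivPoly : ℕ → Polynomial ℝ
  | 0 => 1
  | n + 1 => (1 + X ^ 2) * derivative (secDerivPoly n) + X * secDerivPoly n

private noncomputable def S (n : ℕ) : Polynomial ℝ :=
  ∑ k ∈ Finset.range (n + 1),
    (n.choose k : Polynomial ℝ) * secDerivPoly k * secDerivPoly (n - k)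

private lemma S_step (n : ℕ) :
    S (n + 1) = 2 * X * S n + (1 + X ^ 2) * derivative (S n) := by
  have hder : (1 + X ^ 2) * derivative (S n) =
      ∑ k ∈ Finset.range (n + 1), (n.choose k : Polynomial ℝ) *
        ((1 + X ^ 2) * derivative (secDerivPoly k) * secDerivPoly (n - k)
          + secDerivPoly k * ((1 + X ^ 2) * derivative (secDerivPoly (n - k)))) := by
    rw [S, derivative_sum, Finset.mul_sum]
    refine Finset.sum_congr rfl fun k _ => ?_
    rw [derivative_mul, derivative_mul, derivative_natCast]
    ring
  have h2x : 2 * X * S n =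
      ∑ k ∈ Finset.range (n + 1), (n.choose k : Polynomial ℝ) *
        (X * secDerivPoly k * secDerivPoly (n - k)
          + secDerivPoly k * (X * secDerivPoly (n - k))) := by
    rw [S, Finset.mul_sum]
    refine Finset.sum_congr rfl fun k _ => ?_
    ring
  rw [hder, h2x, ← Finset.sum_add_distrib]
  have hRHS : ∀ k ∈ Finset.range (n + 1),
      (n.choose k : Polynomial ℝ) *
        (X * secDerivPoly k * secDerivPoly (n - k)
          + secDerivPoly k * (X * secDerivPoly (n - k))) +
      (n.choose k : Polynomial ℝ) *
        ((1 + X ^ 2) * derivative (secDerivPoly k) * secDerivPoly (n - k)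
          + secDerivPoly k * ((1 + X ^ 2) * derivative (secDerivPoly (n - k))))
      = (n.choose k : Polynomial ℝ) *
        (secDerivPoly (k + 1) * secDerivPoly (n - k)
          + secDerivPoly k * secDerivPoly (n - k + 1)) := by
    intro k _
    show _ = (n.choose k : Polynomial ℝ) *
        (((1 + X ^ 2) * derivative (secDerivPoly k) + X * secDerivPoly k) * secDerivPoly (n - k)
          + secDerivPoly k * ((1 + X ^ 2) * derivative (secDerivPoly (n - k)) + X * secDerivPoly (n - k)))
    ring
  rw [Finset.sum_congr rfl hRHS]
  -- now show S (n+1) equals this sum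
  rw [S]
  have split : ∑ k ∈ Finset.range (n + 2),
      ((n + 1).choose k : Polynomial ℝ) * secDerivPoly k * secDerivPoly (n + 1 - k)
      = (∑ k ∈ Finset.range (n + 1),
          ((n + 1).choose (k + 1) : Polynomial ℝ) * secDerivPoly (k + 1) * secDerivPoly (n - k))
        + secDerivPoly 0 * secDerivPoly (n + 1) := by
    rw [Finset.sum_range_succ']
    simp
  rw [split]
  have hchoose : ∀ k, (((n + 1).choose (k + 1) : ℕ) : Polynomial ℝ)
      = (n.choose k : Polynomial ℝ) + (n.choose (k + 1) : Polynomial ℝ) := by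
    intro k
    rw [Nat.choose_succ_succ]
    push_cast
    ring
  have hsplit2 : ∀ k ∈ Finset.range (n + 1),
      ((n + 1).choose (k + 1) : Polynomial ℝ) * secDerivPoly (k + 1) * secDerivPoly (n - k)
      = (n.choose k : Polynomial ℝ) * secDerivPoly (k + 1) * secDerivPoly (n - k)
        + (n.choose (k + 1) : Polynomial ℝ) * secDerivPoly (k + 1) * secDerivPoly (n - k) := by
    intro k _
    rw [hchoose]; ring
  rw [Finset.sum_congr rfl hsplit2, Finset.sum_add_distrib]
  have hB : (∑ k ∈ Finset.range (n + 1),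
        (n.choose (k + 1) : Polynomial ℝ) * secDerivPoly (k + 1) * secDerivPoly (n - k))
      + secDerivPoly 0 * secDerivPoly (n + 1)
      = ∑ k ∈ Finset.range (n + 1),
        (n.choose k : Polynomial ℝ) * (secDerivPoly k * secDerivPoly (n - k + 1)) := by
    have : (∑ k ∈ Finset.range (n + 2),
          (n.choose k : Polynomial ℝ) * secDerivPoly k * secDerivPoly (n + 1 - k))
        = (∑ k ∈ Finset.range (n + 1),
        (n.choose (k + 1) : Polynomial ℝ) * secDerivPoly (k + 1) * secDerivPoly (n - k))
        + secDerivPoly 0 * secDerivPoly (n + 1) := by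
      rw [Finset.sum_range_succ']
      simp
    rw [← this, Finset.sum_range_succ]
    simp only [Nat.choose_succ_self, Nat.cast_zero, zero_mul, add_zero]
    refine Finset.sum_congr rfl fun k hk => ?_
    rw [Finset.mem_range] at hk
    have : n + 1 - k = n - k + 1 := by omega
    rw [this]; ring
  rw [add_assoc, hB, ← Finset.sum_add_distrib]
  refine Finset.sum_congr rfl fun k _ => ?_
  ring

theorem tanDerivPoly_eq_sec_convolution (n : ℕ) :
    tanDerivPoly (n + 1) =
      (1 + X ^ 2) * ∑ k ∈ Finset.range (n + 1),
        (n.choose k : Polynomial ℝ) * secDerivPoly k * secDerivPoly (n - k) := by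
  show tanDerivPoly (n + 1) = (1 + X ^ 2) * S n
  induction n with
  | zero =>
    show (1 + X ^ 2) * derivative (X : Polynomial ℝ) = _
    rw [S]
    simp [secDerivPoly]
  | succ n ih =>
    show (1 + X ^ 2) * derivative (tanDerivPoly (n + 1)) = _
    have hd : derivative ((1 : Polynomial ℝ) + X ^ 2) = 2 * X := by
      simp [map_ofNat, one_add_one_eq_two]
    rw [ih, S_step, derivative_mul, hd]
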